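/- The space E^s_{Σ1} (with functions identified when equal a.e.), endowed with the bilinear form ⟨u, v⟩ := ∫_Ω u v dx + ∬_Q (u(x) − u(y))(v(x) − v(y)) / |x − y|^{N+2s} dx dy, is a Hilbert space: this form is a well-defined inner product on E^s_{Σ1}, and E^s_{Σ1} is complete with respect to the induced norm. -/

import Mathlib

open MeasureTheory Set
open Filter Topology
open scoped NNReal ENNReal

noncomputable section

/-- Euclidean space ℝ^N. -/
abbrev Rn (N : ℕ) := EuclideanSpace ℝ (Fin N)

/-- The set Q := ℝ^{2N} \ ((ℝ^N \ Ω) × (ℝ^N \ Ω)). -/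
def Qset (N : ℕ) (Ω : Set (Rn N)) : Set (Rn N × Rn N) :=
  Set.univ \ (Ωᶜ ×ˢ Ωᶜ)

/-- The kernel (u(x)-u(y))(v(x)-v(y))/|x-y|^{N+2s}. -/
def frKer (N : ℕ) (s : ℝ) (u v : Rn N → ℝ) (p : Rn N × Rn N) : ℝ :=
  (u p.1 - u p.2) * (v p.1 - v p.2) / ‖p.1 - p.2‖ ^ ((N : ℝ) + 2 * s)

/-- Membership in the space E^s_{Σ₁}: measurable, vanishing a.e. on Σ₁,
with finite L²(Ω) norm and finite Gagliardo seminorm over Q. -/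
def MemE (N : ℕ) (s : ℝ) (Ω S1 : Set (Rn N)) (u : Rn N → ℝ) : Prop :=
  Measurable u ∧ (∀ᵐ x : Rn N, x ∈ S1 → u x = 0) ∧
  IntegrableOn (fun x => (u x) ^ 2) Ω ∧
  IntegrableOn (frKer N s u u) (Qset N Ω)

namespace EHilbAux

variable {N : ℕ} {s : ℝ} {Ω S1 : Set (Rn N)}

/-- difference function on the product space -/
def Dfun {N : ℕ} (u : Rn N → ℝ) : Rn N × Rn N → ℝ := fun p => u p.1 - u p.2

lemma measurable_Dfun {u : Rn N → ℝ} (hu : Measurable u) : Measurable (Dfun u) :=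
  (hu.comp measurable_fst).sub (hu.comp measurable_snd)

/-- the kernel density as an `ℝ≥0`-valued function -/
def kk (N : ℕ) (s : ℝ) (p : Rn N × Rn N) : ℝ≥0 :=
  Real.toNNReal ((‖p.1 - p.2‖ ^ ((N : ℝ) + 2 * s))⁻¹)

lemma measurable_kk (hs : 0 ≤ s) : Measurable (kk N s) := by
  have hc : (0:ℝ) ≤ (N : ℝ) + 2 * s := by positivity
  exact ((((Real.continuous_rpow_const hc).measurable.comp
    (measurable_fst.sub measurable_snd).norm).inv).real_toNNReal)

/-- weighted measure on Q -/
def muQ (N : ℕ) (s : ℝ) (Ω : Set (Rn N)) : Measure (Rn N × Rn N) :=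
  (volume.restrict (Qset N Ω)).withDensity (fun p => (kk N s p : ℝ≥0∞))

lemma frKer_eq (u v : Rn N → ℝ) :
    frKer N s u v = fun p => kk N s p • (Dfun u p * Dfun v p) := by
  funext p
  have h0 : (0:ℝ) ≤ (‖p.1 - p.2‖ ^ ((N : ℝ) + 2 * s))⁻¹ :=
    inv_nonneg.mpr (Real.rpow_nonneg (norm_nonneg _) _)
  simp only [frKer, kk, Dfun, NNReal.smul_def, Real.coe_toNNReal _ h0,
    div_eq_mul_inv, smul_eq_mul]
  ring

lemma integrableOn_frKer_iff (hs : 0 ≤ s) (u v : Rn N → ℝ) :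
    IntegrableOn (frKer N s u v) (Qset N Ω) ↔
      Integrable (fun p => Dfun u p * Dfun v p) (muQ N s Ω) := by
  rw [muQ, integrable_withDensity_iff_integrable_smul (measurable_kk hs),
    IntegrableOn, frKer_eq]

lemma setIntegral_frKer (hs : 0 ≤ s) (u v : Rn N → ℝ) :
    ∫ p in Qset N Ω, frKer N s u v p = ∫ p, Dfun u p * Dfun v p ∂(muQ N s Ω) := by
  rw [muQ, integral_withDensity_eq_integral_smul (measurable_kk hs)]
  rw [frKer_eq]

lemma memE_memLp_omega {u : Rn N → ℝ} (h : MemE N s Ω S1 u) :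
    MemLp u 2 (volume.restrict Ω) :=
  (memLp_two_iff_integrable_sq h.1.aestronglyMeasurable).mpr h.2.2.1

lemma memE_memLp_Q (hs : 0 ≤ s) {u : Rn N → ℝ} (h : MemE N s Ω S1 u) :
    MemLp (Dfun u) 2 (muQ N s Ω) := by
  refine (memLp_two_iff_integrable_sq
    (measurable_Dfun h.1).aestronglyMeasurable).mpr ?_
  have := (integrableOn_frKer_iff (Ω := Ω) hs u u).mp h.2.2.2
  simpa [sq] using this

lemma integrable_mul_of_sq {α : Type*} [MeasurableSpace α] {μ : Measure α}
    {f g : α → ℝ} (hf : AEStronglyMeasurable f μ) (hg : AEStronglyMeasurable g μ)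
    (hf2 : Integrable (fun x => f x ^ 2) μ) (hg2 : Integrable (fun x => g x ^ 2) μ) :
    Integrable (fun x => f x * g x) μ := by
  refine Integrable.mono' (hf2.add hg2) (hf.mul hg) (Eventually.of_forall fun x => ?_)
  have := sq_nonneg (f x - g x)
  have := sq_nonneg (f x + g x)
  rcases abs_cases (f x * g x) with ⟨h, _⟩ | ⟨h, _⟩ <;>
    simp only [Real.norm_eq_abs, h, Pi.add_apply] <;> nlinarith

/-- squared norm in L² -/
lemma integral_sq_eq {α : Type*} [MeasurableSpace α] {μ : Measure α}
    {f : α → ℝ} (hf : MemLp f 2 μ) : ∫ x, f x ^ 2 ∂μ = ‖hf.toLp f‖ ^ 2 := by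
  have h1 : (inner ℝ (hf.toLp f) (hf.toLp f) : ℝ)
      = ∫ a, (hf.toLp f : α → ℝ) a * (hf.toLp f : α → ℝ) a ∂μ := by
    rw [L2.inner_def]; congr 1
  have h2 : (inner ℝ (hf.toLp f) (hf.toLp f) : ℝ) = ‖hf.toLp f‖ ^ 2 :=
    real_inner_self_eq_norm_sq _
  rw [← h2, h1]
  refine integral_congr_ae ?_
  filter_upwards [hf.coeFn_toLp] with a ha
  simp [ha, sq]

lemma memE_integrable_Dfun_sq (hs : 0 ≤ s) {u : Rn N → ℝ} (h : MemE N s Ω S1 u) :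
    Integrable (fun p => Dfun u p ^ 2) (muQ N s Ω) := by
  have := (integrableOn_frKer_iff (Ω := Ω) hs u u).mp h.2.2.2
  simpa [sq] using this

lemma ae_of_restrict_compl {P : Rn N → Prop} (hΩ : MeasurableSet Ω)
    (h1 : ∀ᵐ x ∂volume.restrict Ω, P x) (h2 : ∀ᵐ x ∂volume.restrict Ωᶜ, P x) :
    ∀ᵐ x ∂(volume : Measure (Rn N)), P x := by
  rw [ae_iff] at h1 h2 ⊢
  rw [Measure.restrict_apply' hΩ] at h1
  rw [Measure.restrict_apply' hΩ.compl] at h2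
  refine measure_mono_null (fun a ha => ?_) (measure_union_null h1 h2)
  by_cases h : a ∈ Ω
  · exact Or.inl ⟨ha, h⟩
  · exact Or.inr ⟨ha, h⟩

lemma ae_prod_fst {α β : Type*} [MeasurableSpace α] [MeasurableSpace β]
    {μ : Measure α} {ν : Measure β} [SFinite ν] {P : α → Prop}
    (h : ∀ᵐ x ∂μ, P x) : ∀ᵐ z ∂μ.prod ν, P z.1 := by
  rw [ae_iff] at h ⊢
  refine measure_mono_null (t := ({x | ¬ P x} ×ˢ (univ : Set β)))
    (fun z hz => ⟨hz, mem_univ _⟩) ?_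
  rw [Measure.prod_prod, h, zero_mul]

lemma ae_prod_snd {α β : Type*} [MeasurableSpace α] [MeasurableSpace β]
    {μ : Measure α} {ν : Measure β} [SFinite ν] {P : β → Prop}
    (h : ∀ᵐ y ∂ν, P y) : ∀ᵐ z ∂μ.prod ν, P z.2 := by
  rw [ae_iff] at h ⊢
  refine measure_mono_null (t := ((univ : Set α) ×ˢ {y | ¬ P y}))
    (fun z hz => ⟨mem_univ _, hz⟩) ?_
  rw [Measure.prod_prod, h, mul_zero]

lemma prodsub : (Ω ×ˢ Ωᶜ : Set (Rn N × Rn N)) ⊆ Qset N Ω := by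
  rintro ⟨x, y⟩ ⟨hx, hy⟩
  exact ⟨mem_univ _, fun hc => hc.1 hx⟩

lemma muQ_ac : muQ N s Ω ≪ (volume : Measure (Rn N × Rn N)) :=
  (withDensity_absolutelyContinuous _ _).trans
    (Measure.absolutelyContinuous_of_le Measure.restrict_le_self)

lemma ae_muQ_of_ae_vol {P : Rn N → Prop}
    (h : ∀ᵐ x ∂(volume : Measure (Rn N)), P x) :
    ∀ᵐ z ∂muQ N s Ω, P z.1 ∧ P z.2 := by
  have h1 : ∀ᵐ z ∂(volume : Measure (Rn N × Rn N)), P z.1 ∧ P z.2 := by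
    rw [Measure.volume_eq_prod]
    exact (ae_prod_fst h).and (ae_prod_snd h)
  exact Filter.Eventually.filter_mono muQ_ac.ae_le h1

lemma ae_restrictProd_of_ae_muQ (hs : 0 ≤ s) {P : Rn N × Rn N → Prop}
    (hΩm : MeasurableSet Ω)
    (h : ∀ᵐ p ∂muQ N s Ω, P p) :
    ∀ᵐ z ∂((volume.restrict Ω).prod (volume.restrict Ωᶜ)), P z := by
  rw [muQ, ae_withDensity_iff (measurable_kk hs).coe_nnreal_ennreal] at h
  have h2 := ae_mono (Measure.restrict_mono (prodsub (Ω := Ω)) le_rfl) h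
  rw [Measure.prod_restrict, ← Measure.volume_eq_prod]
  filter_upwards [h2, ae_restrict_mem (hΩm.prod hΩm.compl)] with z hz hzm
  refine hz ?_
  have hne : z.1 ≠ z.2 := fun e => hzm.2 (e ▸ hzm.1)
  have hpos : (0:ℝ) < (‖z.1 - z.2‖ ^ ((N : ℝ) + 2 * s))⁻¹ :=
    inv_pos.mpr (Real.rpow_pos_of_pos (norm_pos_iff.mpr (sub_ne_zero.mpr hne)) _)
  simp only [kk, ne_eq, ENNReal.coe_eq_zero, Real.toNNReal_eq_zero, not_le]
  exact hpos

lemma part1 (hs : 0 ≤ s) {u v : Rn N → ℝ}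
    (hu : MemE N s Ω S1 u) (hv : MemE N s Ω S1 v) :
    IntegrableOn (fun x => u x * v x) Ω ∧ IntegrableOn (frKer N s u v) (Qset N Ω) := by
  constructor
  · exact integrable_mul_of_sq hu.1.aestronglyMeasurable hv.1.aestronglyMeasurable
      hu.2.2.1 hv.2.2.1
  · rw [integrableOn_frKer_iff hs]
    exact integrable_mul_of_sq (measurable_Dfun hu.1).aestronglyMeasurable
      (measurable_Dfun hv.1).aestronglyMeasurable
      (memE_integrable_Dfun_sq hs hu) (memE_integrable_Dfun_sq hs hv)

lemma part2 (hs : 0 ≤ s) (hΩo : IsOpen Ω) (hne : Ω.Nonempty) {u : Rn N → ℝ}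
    (hu : MemE N s Ω S1 u) :
    (0 ≤ (∫ x in Ω, u x * u x) + ∫ p in Qset N Ω, frKer N s u u p) ∧
    (((∫ x in Ω, u x * u x) + ∫ p in Qset N Ω, frKer N s u u p) = 0 →
      ∀ᵐ x : Rn N, u x = 0) := by
  have h1 : 0 ≤ ∫ x in Ω, u x * u x := integral_nonneg fun x => mul_self_nonneg _
  have hKnn : ∀ p : Rn N × Rn N, 0 ≤ frKer N s u u p := fun p =>
    div_nonneg (mul_self_nonneg _) (Real.rpow_nonneg (norm_nonneg _) _)
  have h2 : 0 ≤ ∫ p in Qset N Ω, frKer N s u u p := integral_nonneg hKnn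
  refine ⟨by linarith, fun h0 => ?_⟩
  have hIuu : IntegrableOn (fun x => u x * u x) Ω := by
    have := hu.2.2.1; simpa [sq] using this
  have e1 : ∫ x in Ω, u x * u x = 0 := le_antisymm (by linarith) h1
  have e2 : ∫ p in Qset N Ω, frKer N s u u p = 0 := by linarith
  have hu0 : ∀ᵐ x ∂volume.restrict Ω, u x = 0 := by
    have := (integral_eq_zero_iff_of_nonneg (fun x => mul_self_nonneg (u x)) hIuu).mp e1
    filter_upwards [this] with x hx
    exact mul_self_eq_zero.mp hx
  have hq0 : ∀ᵐ p ∂volume.restrict (Qset N Ω), frKer N s u u p = 0 :=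
    (integral_eq_zero_iff_of_nonneg hKnn hu.2.2.2).mp e2
  set Pm := (volume.restrict Ω).prod (volume.restrict Ωᶜ) with hPm
  have hq1 : ∀ᵐ z ∂Pm, frKer N s u u z = 0 := by
    rw [hPm, Measure.prod_restrict, ← Measure.volume_eq_prod]
    exact ae_mono (Measure.restrict_mono (prodsub (Ω := Ω)) le_rfl) hq0
  have hmem : ∀ᵐ z ∂Pm, z ∈ (Ω ×ˢ Ωᶜ : Set (Rn N × Rn N)) := by
    rw [hPm, Measure.prod_restrict, ← Measure.volume_eq_prod]
    exact ae_restrict_mem (hΩo.measurableSet.prod hΩo.measurableSet.compl)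
  have hu2 : ∀ᵐ z ∂Pm, u z.2 = 0 := by
    filter_upwards [hq1, ae_prod_fst hu0, hmem] with z hz h1z h3
    have hne2 : z.1 ≠ z.2 := fun e => h3.2 (e ▸ h3.1)
    have hpos : (0:ℝ) < ‖z.1 - z.2‖ ^ ((N : ℝ) + 2 * s) :=
      Real.rpow_pos_of_pos (norm_pos_iff.mpr (sub_ne_zero.mpr hne2)) _
    have hnum : (u z.1 - u z.2) * (u z.1 - u z.2) = 0 := by
      rcases div_eq_zero_iff.mp hz with h | h
      · exact h
      · exact absurd h hpos.ne'
    have := sub_eq_zero.mp (mul_self_eq_zero.mp hnum)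
    rw [← this, h1z]
  have hμΩ : volume.restrict Ω ≠ 0 := by
    rw [Ne, Measure.restrict_eq_zero]
    exact (hΩo.measure_pos volume hne).ne'
  have hfub := Measure.ae_ae_of_ae_prod hu2
  obtain ⟨x, hx⟩ := @Filter.Eventually.exists _ _ _ (ae_neBot.mpr hμΩ) hfub
  exact ae_of_restrict_compl hΩo.measurableSet hu0 hx

lemma Dfun_sub_apply (u v : Rn N → ℝ) (p : Rn N × Rn N) :
    Dfun (fun z => u z - v z) p = Dfun u p - Dfun v p := by
  simp only [Dfun]; ring

set_option maxHeartbeats 2000000 in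
lemma part3 (hs0 : 0 < s) (hΩo : IsOpen Ω) (hne : Ω.Nonempty)
    (un : ℕ → Rn N → ℝ) (hmem : ∀ n, MemE N s Ω S1 (un n))
    (hC : ∀ ε : ℝ, 0 < ε → ∃ M : ℕ, ∀ m n : ℕ, M ≤ m → M ≤ n →
      (∫ x in Ω, (un m x - un n x) ^ 2) +
        (∫ p in Qset N Ω,
          frKer N s (fun z => un m z - un n z) (fun z => un m z - un n z) p) < ε) :
    ∃ u : Rn N → ℝ, MemE N s Ω S1 u ∧
      Filter.Tendsto (fun n =>
        (∫ x in Ω, (un n x - u x) ^ 2) +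
          ∫ p in Qset N Ω,
            frKer N s (fun z => un n z - u z) (fun z => un n z - u z) p)
        Filter.atTop (nhds 0) := by
  have hs : (0:ℝ) ≤ s := hs0.le
  set μΩ := volume.restrict Ω with hμΩdef
  set ν := muQ N s Ω with hνdef
  have hmΩ : ∀ n, MemLp (un n) 2 μΩ := fun n => memE_memLp_omega (hmem n)
  have hmQ : ∀ n, MemLp (Dfun (un n)) 2 ν := fun n => memE_memLp_Q hs (hmem n)
  set F : ℕ → Lp ℝ 2 μΩ := fun n => (hmΩ n).toLp (un n) with hFdef
  set G : ℕ → Lp ℝ 2 ν := fun n => (hmQ n).toLp (Dfun (un n)) with hGdef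
  -- the two key integral identities
  have keyA : ∀ m n : ℕ, (∫ x in Ω, (un m x - un n x) ^ 2) = ‖F m - F n‖ ^ 2 := by
    intro m n
    have h2 : F m - F n = ((hmΩ m).sub (hmΩ n)).toLp (fun x => un m x - un n x) :=
      (MemLp.toLp_sub (hmΩ m) (hmΩ n)).symm
    rw [h2]
    exact integral_sq_eq _
  have keyB : ∀ m n : ℕ, (∫ p in Qset N Ω,
      frKer N s (fun z => un m z - un n z) (fun z => un m z - un n z) p)
      = ‖G m - G n‖ ^ 2 := by
    intro m n
    rw [setIntegral_frKer hs]
    have h2 : G m - G n = ((hmQ m).sub (hmQ n)).toLp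
        (fun p => Dfun (un m) p - Dfun (un n) p) :=
      (MemLp.toLp_sub (hmQ m) (hmQ n)).symm
    rw [h2]
    refine Eq.trans ?_ (integral_sq_eq (((hmQ m).sub (hmQ n))))
    refine integral_congr_ae (Eventually.of_forall fun p => ?_)
    simp only [Pi.sub_apply, Dfun]
    ring
  -- Cauchy sequences in the two L² spaces
  have cF : CauchySeq F := by
    rw [Metric.cauchySeq_iff]
    intro ε hε
    obtain ⟨M, hM⟩ := hC (ε ^ 2) (by positivity)
    refine ⟨M, fun m hm n hn => ?_⟩
    have h := hM m n hm hn
    rw [keyA, keyB] at h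
    rw [dist_eq_norm]
    nlinarith [norm_nonneg (F m - F n), norm_nonneg (G m - G n),
      sq_nonneg (‖G m - G n‖)]
  have cG : CauchySeq G := by
    rw [Metric.cauchySeq_iff]
    intro ε hε
    obtain ⟨M, hM⟩ := hC (ε ^ 2) (by positivity)
    refine ⟨M, fun m hm n hn => ?_⟩
    have h := hM m n hm hn
    rw [keyA, keyB] at h
    rw [dist_eq_norm]
    nlinarith [norm_nonneg (F m - F n), norm_nonneg (G m - G n)]
  obtain ⟨flim, hfconv⟩ := cauchySeq_tendsto_of_complete cF
  obtain ⟨glim, hgconv⟩ := cauchySeq_tendsto_of_complete cG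
  -- a.e. convergent subsequence
  obtain ⟨φ, hφmono, hφae⟩ :=
    (tendstoInMeasure_of_tendsto_Lp hfconv).exists_seq_tendsto_ae
  obtain ⟨ψ, hψmono, hψae⟩ :=
    (tendstoInMeasure_of_tendsto_Lp
      (hgconv.comp hφmono.tendsto_atTop)).exists_seq_tendsto_ae
  set ρ : ℕ → ℕ := φ ∘ ψ with hρdef
  have hFae : ∀ᵐ x ∂μΩ, Tendsto (fun i => (F (ρ i) : Rn N → ℝ) x) atTop (𝓝 (flim x)) := by
    filter_upwards [hφae] with x hx
    exact hx.comp hψmono.tendsto_atTop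
  have haecoeF : ∀ᵐ x ∂μΩ, ∀ n, (F n : Rn N → ℝ) x = un n x :=
    ae_all_iff.mpr fun n => MemLp.coeFn_toLp _
  have hunΩ : ∀ᵐ x ∂μΩ, Tendsto (fun i => un (ρ i) x) atTop (𝓝 (flim x)) := by
    filter_upwards [hFae, haecoeF] with x hx he
    exact hx.congr fun i => he (ρ i)
  have haecoeG : ∀ᵐ z ∂ν, ∀ n, (G n : Rn N × Rn N → ℝ) z = Dfun (un n) z :=
    ae_all_iff.mpr fun n => MemLp.coeFn_toLp _
  have hGae : ∀ᵐ z ∂ν, Tendsto (fun i => Dfun (un (ρ i)) z) atTop (𝓝 (glim z)) := by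
    filter_upwards [hψae, haecoeG] with z hz he
    exact hz.congr fun i => he (ρ i)
  -- a.e. existence of a pointwise limit on all of ℝ^N
  have hexΩ : ∀ᵐ x ∂μΩ, ∃ l, Tendsto (fun i => un (ρ i) x) atTop (𝓝 l) := by
    filter_upwards [hunΩ] with x hx; exact ⟨flim x, hx⟩
  have hQprod : ∀ᵐ z ∂(μΩ.prod (volume.restrict Ωᶜ)),
      Tendsto (fun i => Dfun (un (ρ i)) z) atTop (𝓝 (glim z)) :=
    ae_restrictProd_of_ae_muQ hs hΩo.measurableSet hGae
  have hsnd : ∀ᵐ z ∂(μΩ.prod (volume.restrict Ωᶜ)),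
      ∃ l, Tendsto (fun i => un (ρ i) z.2) atTop (𝓝 l) := by
    filter_upwards [hQprod, ae_prod_fst (ν := volume.restrict Ωᶜ) hunΩ] with z hD h1
    refine ⟨flim z.1 - glim z, ?_⟩
    have := h1.sub hD
    exact this.congr fun i => by simp [Dfun]
  have hμΩ0 : μΩ ≠ 0 := by
    rw [hμΩdef, Ne, Measure.restrict_eq_zero]
    exact (hΩo.measure_pos volume hne).ne'
  obtain ⟨x₀, hx₀⟩ := @Filter.Eventually.exists _ _ _ (ae_neBot.mpr hμΩ0)
    (Measure.ae_ae_of_ae_prod hsnd)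
  have hex : ∀ᵐ x ∂(volume : Measure (Rn N)), ∃ l,
      Tendsto (fun i => un (ρ i) x) atTop (𝓝 l) :=
    ae_of_restrict_compl hΩo.measurableSet hexΩ hx₀
  obtain ⟨u, hume, hulim⟩ := measurable_limit_of_tendsto_metrizable_ae
    (fun i => (hmem (ρ i)).1.aemeasurable) hex
  -- identification of the limit
  have hulimO : ∀ᵐ x ∂μΩ, Tendsto (fun i => un (ρ i) x) atTop (𝓝 (u x)) :=
    ae_restrict_of_ae hulim
  have huf : u =ᵐ[μΩ] (flim : Rn N → ℝ) := by
    filter_upwards [hulimO, hunΩ] with x h1 h2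
    exact tendsto_nhds_unique h1 h2
  have hMu : MemLp u 2 μΩ := MemLp.ae_eq huf.symm (Lp.memLp flim)
  have hgood : ∀ᵐ z ∂ν, Tendsto (fun i => un (ρ i) z.1) atTop (𝓝 (u z.1)) ∧
      Tendsto (fun i => un (ρ i) z.2) atTop (𝓝 (u z.2)) := ae_muQ_of_ae_vol hulim
  have hDg : Dfun u =ᵐ[ν] (glim : Rn N × Rn N → ℝ) := by
    filter_upwards [hgood, hGae] with z hz hD
    exact tendsto_nhds_unique (hz.1.sub hz.2) hD
  have hMD : MemLp (Dfun u) 2 ν := MemLp.ae_eq hDg.symm (Lp.memLp glim)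
  have hS1u : ∀ᵐ x : Rn N, x ∈ S1 → u x = 0 := by
    have hall : ∀ᵐ x : Rn N, ∀ n, x ∈ S1 → un n x = 0 :=
      ae_all_iff.mpr fun n => (hmem n).2.1
    filter_upwards [hall, hulim] with x hx hlim hxS1
    refine tendsto_nhds_unique hlim ?_
    have he : (fun i => un (ρ i) x) = fun _ => (0:ℝ) := funext fun i => hx (ρ i) hxS1
    rw [he]
    exact tendsto_const_nhds
  have htoLpu : hMu.toLp u = flim := by
    rw [← Lp.toLp_coeFn flim (Lp.memLp flim)]
    exact MemLp.toLp_congr hMu (Lp.memLp flim) huf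
  have htoLpD : hMD.toLp (Dfun u) = glim := by
    rw [← Lp.toLp_coeFn glim (Lp.memLp glim)]
    exact MemLp.toLp_congr hMD (Lp.memLp glim) hDg
  refine ⟨u, ⟨hume, hS1u, ?_, ?_⟩, ?_⟩
  · exact (memLp_two_iff_integrable_sq hume.aestronglyMeasurable).mp hMu
  · rw [integrableOn_frKer_iff hs]
    have := (memLp_two_iff_integrable_sq
      (measurable_Dfun hume).aestronglyMeasurable).mp hMD
    simpa [sq] using this
  -- convergence of the full sequence
  have keyA' : ∀ n : ℕ, (∫ x in Ω, (un n x - u x) ^ 2) = ‖F n - flim‖ ^ 2 := by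
    intro n
    have h2 : F n - flim = ((hmΩ n).sub hMu).toLp (fun x => un n x - u x) := by
      rw [← htoLpu]
      exact (MemLp.toLp_sub (hmΩ n) hMu).symm
    rw [h2]
    exact integral_sq_eq _
  have keyB' : ∀ n : ℕ, (∫ p in Qset N Ω,
      frKer N s (fun z => un n z - u z) (fun z => un n z - u z) p)
      = ‖G n - glim‖ ^ 2 := by
    intro n
    rw [setIntegral_frKer hs]
    have h2 : G n - glim = ((hmQ n).sub hMD).toLp
        (fun p => Dfun (un n) p - Dfun u p) := by
      rw [← htoLpD]
      exact (MemLp.toLp_sub (hmQ n) hMD).symm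
    rw [h2]
    refine Eq.trans ?_ (integral_sq_eq ((hmQ n).sub hMD))
    refine integral_congr_ae (Eventually.of_forall fun p => ?_)
    simp only [Pi.sub_apply, Dfun]
    ring
  have hA : Tendsto (fun n => ‖F n - flim‖ ^ 2) atTop (𝓝 (0:ℝ)) := by
    have h1 : Tendsto (fun n => ‖F n - flim‖) atTop (𝓝 0) :=
      tendsto_iff_norm_sub_tendsto_zero.mp hfconv
    simpa using h1.pow 2
  have hB : Tendsto (fun n => ‖G n - glim‖ ^ 2) atTop (𝓝 (0:ℝ)) := by
    have h1 : Tendsto (fun n => ‖G n - glim‖) atTop (𝓝 0) :=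
      tendsto_iff_norm_sub_tendsto_zero.mp hgconv
    simpa using h1.pow 2
  have hsum := hA.add hB
  rw [add_zero] at hsum
  exact hsum.congr fun n => by rw [← keyA' n, ← keyB' n]

end EHilbAux

/-- Weak solution of the mixed problem (-Δ)^s u = f in Ω, u = 0 in Σ₁, 𝒩_s u = 0 in Σ₂. -/
def IsWeakSolMixed (N : ℕ) (s aNs : ℝ) (Ω S1 : Set (Rn N)) (f u : Rn N → ℝ) : Prop :=
  MemE N s Ω S1 u ∧ ∀ φ : Rn N → ℝ, MemE N s Ω S1 φ →
    (aNs / 2) * ∫ p in Qset N Ω, frKer N s u φ p = ∫ x in Ω, f x * φ x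

/-- E^s_{Σ₁} is a Hilbert space: the bilinear form
⟨u,v⟩ = ∫_Ω u v + ∬_Q (u(x)-u(y))(v(x)-v(y))/|x-y|^{N+2s} is well defined on
E^s_{Σ₁}, it is positive definite (up to a.e. identification), and E^s_{Σ₁} is
complete for the induced norm. -/
theorem E_is_Hilbert
    {N : ℕ} (hN : 1 ≤ N) {s : ℝ} (hs0 : 0 < s) (hs1 : s < 1)
    {Ω S1 S2 : Set (Rn N)} (hΩo : IsOpen Ω) (hΩb : Bornology.IsBounded Ω)
    (hΩc : IsConnected Ω)
    (hS1o : IsOpen S1) (hS2o : IsOpen S2)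
    (hS1m : 0 < volume S1) (hS2m : 0 < volume S2)
    (hdisj : Disjoint S1 S2) (hcov : closure S1 ∪ closure S2 = Ωᶜ) :
    -- the inner product is well defined on E^s_{Σ₁}
    (∀ u v : Rn N → ℝ, MemE N s Ω S1 u → MemE N s Ω S1 v →
      IntegrableOn (fun x => u x * v x) Ω ∧ IntegrableOn (frKer N s u v) (Qset N Ω)) ∧
    -- positivity and definiteness (after identification of a.e. equal functions)
    (∀ u : Rn N → ℝ, MemE N s Ω S1 u →
      (0 ≤ (∫ x in Ω, u x * u x) + ∫ p in Qset N Ω, frKer N s u u p) ∧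
      (((∫ x in Ω, u x * u x) + ∫ p in Qset N Ω, frKer N s u u p) = 0 →
        ∀ᵐ x : Rn N, u x = 0)) ∧
    -- completeness for the induced norm
    (∀ un : ℕ → Rn N → ℝ, (∀ n, MemE N s Ω S1 (un n)) →
      (∀ ε : ℝ, 0 < ε → ∃ M : ℕ, ∀ m n : ℕ, M ≤ m → M ≤ n →
        (∫ x in Ω, (un m x - un n x) ^ 2) +
          (∫ p in Qset N Ω,
            frKer N s (fun z => un m z - un n z) (fun z => un m z - un n z) p) < ε) →
      ∃ u : Rn N → ℝ, MemE N s Ω S1 u ∧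
        Filter.Tendsto (fun n =>
          (∫ x in Ω, (un n x - u x) ^ 2) +
            ∫ p in Qset N Ω,
              frKer N s (fun z => un n z - u z) (fun z => un n z - u z) p)
          Filter.atTop (nhds 0)) := by
  refine ⟨fun u v hu hv => EHilbAux.part1 hs0.le hu hv,
    fun u hu => EHilbAux.part2 hs0.le hΩo hΩc.nonempty hu,
    fun un hun hC => EHilbAux.part3 hs0 hΩo hΩc.nonempty un hun hC⟩
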